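/- For every positive integer ℓ, a graph with minimum degree δ has 2^ℓ pairwise edge-disjoint spanning subgraphs, each with minimum degree at least (δ - 2^{ℓ+1} + 2)/2^ℓ. -/

import Mathlib

open SimpleGraph
namespace EdgeDisjointSplit

set_option linter.unusedSectionVars false
variable {V : Type*} [Fintype V] [DecidableEq V]

def incCount (S : Finset (Sym2 V)) (v : V) : ℕ := (S.filter (fun e => v ∈ e)).card

lemma incCount_insert {S : Finset (Sym2 V)} {e : Sym2 V} (he : e ∉ S) (v : V) :
    incCount (insert e S) v = incCount S v + (if v ∈ e then 1 else 0) := by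
  unfold incCount
  rw [Finset.filter_insert]
  split
  · rw [Finset.card_insert_of_notMem (fun h => he (Finset.mem_of_mem_filter e h))]
  · simp

def altSet {G : SimpleGraph V} : {a b : V} → G.Walk a b → Bool → Finset (Sym2 V)
  | _, _, SimpleGraph.Walk.nil, _ => ∅
  | _, _, @SimpleGraph.Walk.cons _ _ u v _ _ q, c =>
      if c then insert s(u, v) (altSet q false) else altSet q true

lemma altSet_subset {G : SimpleGraph V} {a b : V} (p : G.Walk a b) (c : Bool) :
    altSet p c ⊆ p.edges.toFinset := by
  induction p generalizing c with
  | nil => simp [altSet]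
  | cons h q ih =>
    rw [Walk.edges_cons, List.toFinset_cons]
    cases c <;> simp only [altSet, if_true, if_false, Bool.false_eq_true]
    · exact (ih true).trans (Finset.subset_insert _ _)
    · exact Finset.insert_subset_insert _ (ih false)

lemma altSet_union {G : SimpleGraph V} {a b : V} (p : G.Walk a b) :
    altSet p true ∪ altSet p false = p.edges.toFinset := by
  induction p with
  | nil => simp [altSet]
  | cons h q ih =>
    rw [Walk.edges_cons, List.toFinset_cons]
    simp only [altSet, if_true, if_false, Bool.false_eq_true]
    rw [Finset.insert_union, Finset.union_comm, ih]

lemma altSet_disjoint {G : SimpleGraph V} {a b : V} {p : G.Walk a b} (hp : p.IsTrail) :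
    Disjoint (altSet p true) (altSet p false) := by
  induction p with
  | nil => simp [altSet]
  | cons h q ih =>
    rw [Walk.isTrail_cons] at hp
    simp only [altSet, if_true, if_false, Bool.false_eq_true]
    rw [Finset.disjoint_insert_left]
    exact ⟨fun hmem => hp.2 (by simpa using altSet_subset q true hmem), (ih hp.1).symm⟩

lemma incCount_alt {G : SimpleGraph V} {a b : V} {p : G.Walk a b} (hp : p.IsTrail) (w : V) :
    (incCount (altSet p true) w : ℤ) - incCount (altSet p false) w
      = (if w = a then 1 else 0) - (-1 : ℤ) ^ p.length * (if w = b then 1 else 0) := by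
  induction p with
  | nil => simp [altSet, incCount]
  | @cons u v bb h q ih =>
    rw [Walk.isTrail_cons] at hp
    have hins : s(u, v) ∉ altSet q false := fun hmem => hp.2 (by simpa using altSet_subset q false hmem)
    simp only [altSet, if_true, if_false, Bool.false_eq_true]
    rw [incCount_insert hins]
    have h2 := ih hp.1
    have hne : u ≠ v := h.ne
    have hmem : (if w ∈ s(u,v) then (1:ℤ) else 0) = (if w = u then 1 else 0) + (if w = v then 1 else 0) := by
      by_cases h1 : w = u <;> by_cases h3 : w = v
      · exact absurd (h1.symm.trans h3) hne
      · simp [Sym2.mem_iff, h1, h3]; exact hne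
      · simp [Sym2.mem_iff, h1, h3]; exact fun hh => hne hh.symm
      · simp [Sym2.mem_iff, h1, h3]
    rw [Walk.length_cons]
    push_cast
    have hneg : (-1 : ℤ) ^ (q.length + 1) = -((-1:ℤ)^q.length) := by ring
    rw [hneg]
    rw [hmem]
    linarith [h2]


lemma neighborSet_sup' (A B : SimpleGraph V) (v : V) :
    (A ⊔ B).neighborSet v = A.neighborSet v ∪ B.neighborSet v := by
  ext w; simp [mem_neighborSet]

lemma deg_sup_of_disjoint (A B : SimpleGraph V) (h : Disjoint A.edgeSet B.edgeSet) (v : V) :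
    ((A ⊔ B).neighborSet v).ncard = (A.neighborSet v).ncard + (B.neighborSet v).ncard := by
  rw [neighborSet_sup']
  refine Set.ncard_union_eq ?_ (Set.toFinite _) (Set.toFinite _)
  rw [Set.disjoint_left]
  intro w hw hw'
  exact Set.disjoint_left.mp h (A.mem_edgeSet.mpr hw) (B.mem_edgeSet.mpr hw')

lemma deg_fromEdgeSet_single (x y : V) (hxy : x ≠ y) (v : V) :
    ((fromEdgeSet {s(x,y)}).neighborSet v).ncard = if v ∈ s(x,y) then 1 else 0 := by
  by_cases h1 : v = x
  · subst h1
    have : (fromEdgeSet {s(v,y)}).neighborSet v = {y} := by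
      ext w
      simp only [mem_neighborSet, fromEdgeSet_adj, Set.mem_singleton_iff, Sym2.eq, Sym2.rel_iff',
        Prod.mk.injEq, Prod.swap_prod_mk]
      constructor
      · rintro ⟨(⟨h,h'⟩|⟨h,h'⟩), hne⟩ <;> simp_all
      · rintro rfl; aesop
    simp [this, Sym2.mem_iff]
  · by_cases h2 : v = y
    · subst h2
      have : (fromEdgeSet {s(x,v)}).neighborSet v = {x} := by
        ext w
        simp only [mem_neighborSet, fromEdgeSet_adj, Set.mem_singleton_iff, Sym2.eq, Sym2.rel_iff',
          Prod.mk.injEq, Prod.swap_prod_mk]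
        constructor
        · rintro ⟨(⟨h,h'⟩|⟨h,h'⟩), hne⟩ <;> simp_all
        · rintro rfl; aesop
      simp [this, Sym2.mem_iff, h1]
    · have : (fromEdgeSet {s(x,y)}).neighborSet v = ∅ := by
        ext w
        simp only [mem_neighborSet, fromEdgeSet_adj, Set.mem_singleton_iff, Sym2.eq, Sym2.rel_iff',
          Prod.mk.injEq, Prod.swap_prod_mk, Set.mem_empty_iff_false, iff_false]
        rintro ⟨(⟨h,h'⟩|⟨h,h'⟩), hne⟩ <;> simp_all
      simp [this, Sym2.mem_iff, h1, h2]

lemma deg_fromEdgeSet (S : Finset (Sym2 V)) (hnd : ∀ e ∈ S, ¬e.IsDiag) (v : V) :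
    ((fromEdgeSet (↑S : Set (Sym2 V))).neighborSet v).ncard = incCount S v := by
  classical
  induction S using Finset.induction with
  | empty =>
    have : (fromEdgeSet (↑(∅ : Finset (Sym2 V)) : Set (Sym2 V))) = ⊥ := by simp
    rw [this]
    have : (⊥ : SimpleGraph V).neighborSet v = ∅ := by ext w; simp
    simp [this, incCount]
  | @insert e S he ih =>
    have hnd' : ∀ e ∈ S, ¬e.IsDiag := fun e h => hnd e (Finset.mem_insert_of_mem h)
    have step : (↑(insert e S) : Set (Sym2 V)) = {e} ∪ ↑S := by simp
    rw [step, fromEdgeSet_union]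
    have hdisj : Disjoint (fromEdgeSet {e}).edgeSet (fromEdgeSet (↑S : Set (Sym2 V))).edgeSet := by
      rw [edgeSet_fromEdgeSet, edgeSet_fromEdgeSet]
      refine Set.disjoint_left.mpr ?_
      rintro f ⟨hf1, -⟩ ⟨hf2, -⟩
      rw [Set.mem_singleton_iff] at hf1
      exact he (hf1 ▸ hf2)
    rw [deg_sup_of_disjoint _ _ hdisj, ih hnd']
    obtain ⟨x, y⟩ := e
    have hxy : x ≠ y := by
      intro hh; exact hnd s(x,y) (Finset.mem_insert_self _ _) (by simp [hh])
    rw [deg_fromEdgeSet_single x y hxy]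
    unfold incCount
    rw [Finset.filter_insert]
    split
    · rw [Finset.card_insert_of_notMem (fun hh => he (Finset.mem_of_mem_filter _ hh))]; omega
    · simp


lemma exists_leaf (G : SimpleGraph V) (hac : G.IsAcyclic) {x y : V} (hxy : G.Adj x y) :
    ∃ a b : V, G.Adj a b ∧ G.neighborSet a = {b} := by
  classical
  set P : ℕ → Prop := fun n => ∃ (a b : V) (p : G.Walk a b), p.IsPath ∧ p.length = n with hP
  have hcard : 1 ≤ Fintype.card V := by
    have : Nonempty V := ⟨x⟩
    exact Fintype.card_pos
  have hP1 : P 1 := ⟨x, y, Walk.cons hxy Walk.nil, by simp [Walk.cons_isPath_iff, hxy.ne], by simp⟩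
  set n := Nat.findGreatest P (Fintype.card V) with hn
  have hPn : P n := Nat.findGreatest_spec hcard hP1
  obtain ⟨a, b, p, hp, hlen⟩ := hPn
  have hn1 : 1 ≤ n := Nat.le_findGreatest hcard hP1
  cases p with
  | nil => simp at hlen; omega
  | @cons _ a₂ _ h q =>
    refine ⟨a, a₂, h, ?_⟩
    ext w
    simp only [mem_neighborSet, Set.mem_singleton_iff]
    constructor
    · intro hw
      by_cases hs : w ∈ (Walk.cons h q).support
      · by_contra hwa₂
        have hp' : ((Walk.cons h q).takeUntil w hs).IsPath := hp.takeUntil hs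
        have hcyc := Path.cons_isCycle ⟨_, hp'⟩ hw.symm ?he
        · exact hac _ hcyc
        · -- s(w, a) ∉ edges of takeUntil
          intro hmem
          have hmem' : s(w, a) ∈ (Walk.cons h q).edges :=
            Walk.edges_takeUntil_subset _ hs hmem
          rw [Walk.edges_cons, List.mem_cons] at hmem'
          rcases hmem' with heq | hmem'
          · rw [Sym2.eq_swap] at heq
            rw [Sym2.congr_right] at heq
            exact hwa₂ heq
          · have : a ∈ q.support := Walk.snd_mem_support_of_mem_edges q hmem'
            rw [Walk.cons_isPath_iff] at hp
            exact hp.2 this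
      · -- extend the path, contradiction with maximality
        have hp'' : (Walk.cons hw.symm (Walk.cons h q)).IsPath :=
          (Walk.cons_isPath_iff _ _).mpr ⟨hp, hs⟩
        have hlt : (Walk.cons hw.symm (Walk.cons h q)).length < Fintype.card V :=
          hp''.length_lt
        have : P (n + 1) := ⟨w, b, _, hp'', by simp [hlen]⟩
        rw [Walk.length_cons, hlen] at hlt
        exact absurd this (Nat.findGreatest_is_greatest (lt_add_one n) (by omega))
    · rintro rfl; exact h
lemma attach_edge (G A B : SimpleGraph V) (a b : V) (hadj : G.Adj a b)
    (hnbr : G.neighborSet a = {b})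
    (hsup : A ⊔ B = G.deleteEdges {s(a,b)})
    (hdisj : Disjoint A.edgeSet B.edgeSet)
    (hbal : ∀ v, |((A.neighborSet v).ncard : ℤ) - ((B.neighborSet v).ncard : ℤ)| ≤ 2)
    (hle : (B.neighborSet b).ncard ≤ (A.neighborSet b).ncard) :
    ∃ A' B' : SimpleGraph V, A' ⊔ B' = G ∧ Disjoint A'.edgeSet B'.edgeSet ∧
      ∀ v, |((A'.neighborSet v).ncard : ℤ) - ((B'.neighborSet v).ncard : ℤ)| ≤ 2 := by
  have hne : a ≠ b := hadj.ne
  have heG : s(a,b) ∈ G.edgeSet := G.mem_edgeSet.mpr hadj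
  have hAle : A ≤ G.deleteEdges {s(a,b)} := hsup ▸ le_sup_left
  have hBle : B ≤ G.deleteEdges {s(a,b)} := hsup ▸ le_sup_right
  have hAe : s(a,b) ∉ A.edgeSet := by
    intro hmem
    have := hAle ((A.mem_edgeSet).mp hmem)
    rw [deleteEdges_adj] at this
    exact this.2 rfl
  have hBe : s(a,b) ∉ B.edgeSet := by
    intro hmem
    have := hBle ((B.mem_edgeSet).mp hmem)
    rw [deleteEdges_adj] at this
    exact this.2 rfl
  have hfe : (fromEdgeSet {s(a,b)}).edgeSet = {s(a,b)} := by
    rw [edgeSet_fromEdgeSet]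
    ext f
    simp only [Set.mem_diff, Set.mem_singleton_iff, Set.mem_setOf_eq]
    constructor
    · exact fun h => h.1
    · rintro rfl; exact ⟨rfl, G.not_isDiag_of_mem_edgeSet heG⟩
  refine ⟨A, B ⊔ fromEdgeSet {s(a,b)}, ?_, ?_, ?_⟩
  · rw [← sup_assoc, hsup, ← edgeSet_inj, edgeSet_sup, edgeSet_deleteEdges, hfe,
      Set.diff_union_of_subset (by simpa using heG)]
  · rw [edgeSet_sup, hfe, Set.disjoint_union_right]
    exact ⟨hdisj, by simpa using hAe⟩
  · have hdegB' : ∀ v, (((B ⊔ fromEdgeSet {s(a,b)}).neighborSet v).ncard)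
        = (B.neighborSet v).ncard + if v ∈ s(a,b) then 1 else 0 := by
      intro v
      rw [deg_sup_of_disjoint _ _ (by rw [hfe]; simpa using hBe) v,
        deg_fromEdgeSet_single a b hne v]
    intro v
    rw [hdegB' v]
    by_cases hva : v = a
    · subst hva
      have h0 : (G.deleteEdges {s(v,b)}).neighborSet v = ∅ := by
        ext w
        simp only [mem_neighborSet, deleteEdges_adj, Set.mem_singleton_iff,
          Set.mem_empty_iff_false, iff_false, not_and, not_not]
        intro hw
        have : w ∈ G.neighborSet v := hw
        rw [hnbr, Set.mem_singleton_iff] at this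
        subst this; rfl
      have hA0 : (A.neighborSet v).ncard = 0 := by
        have : A.neighborSet v = ∅ := Set.subset_empty_iff.mp
          (h0 ▸ fun w hw => (hAle hw : (G.deleteEdges {s(v,b)}).Adj v w))
        simp [this]
      have hB0 : (B.neighborSet v).ncard = 0 := by
        have : B.neighborSet v = ∅ := Set.subset_empty_iff.mp
          (h0 ▸ fun w hw => (hBle hw : (G.deleteEdges {s(v,b)}).Adj v w))
        simp [this]
      rw [hA0, hB0, if_pos (by simp : v ∈ s(v,b))]
      norm_num
    · by_cases hvb : v = b
      · subst hvb
        rw [if_pos (by simp : v ∈ s(a,v))]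
        have h1 := hbal v
        have h2 : ((B.neighborSet v).ncard : ℤ) ≤ (A.neighborSet v).ncard := by exact_mod_cast hle
        rw [abs_le] at h1 ⊢
        push_cast
        constructor <;> linarith [h1.1, h1.2]
      · rw [if_neg (by simp [Sym2.mem_iff, hva, hvb])]
        simpa using hbal v
lemma attach_trail (G A B : SimpleGraph V) (v : V) (c : G.Walk v v) (htrail : c.IsTrail)
    (hsup : A ⊔ B = G.deleteEdges ↑c.edges.toFinset)
    (hdisj : Disjoint A.edgeSet B.edgeSet)
    (hbal : ∀ w, |((A.neighborSet w).ncard : ℤ) - ((B.neighborSet w).ncard : ℤ)| ≤ 2)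
    (hle : (B.neighborSet v).ncard ≤ (A.neighborSet v).ncard) :
    ∃ A' B' : SimpleGraph V, A' ⊔ B' = G ∧ Disjoint A'.edgeSet B'.edgeSet ∧
      ∀ w, |((A'.neighborSet w).ncard : ℤ) - ((B'.neighborSet w).ncard : ℤ)| ≤ 2 := by
  set E : Finset (Sym2 V) := c.edges.toFinset with hE
  have hEG : (↑E : Set (Sym2 V)) ⊆ G.edgeSet := by
    intro e he
    exact c.edges_subset_edgeSet (List.mem_toFinset.mp (Finset.mem_coe.mp he))
  have hEnd : ∀ e ∈ E, ¬e.IsDiag := fun e he =>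
    G.not_isDiag_of_mem_edgeSet (hEG he)
  set T := altSet c true with hT
  set F := altSet c false with hF
  have hTsub : T ⊆ E := altSet_subset c true
  have hFsub : F ⊆ E := altSet_subset c false
  have hTnd : ∀ e ∈ T, ¬e.IsDiag := fun e he => hEnd e (hTsub he)
  have hFnd : ∀ e ∈ F, ¬e.IsDiag := fun e he => hEnd e (hFsub he)
  have hfeT : (fromEdgeSet (↑T : Set (Sym2 V))).edgeSet = ↑T := by
    rw [edgeSet_fromEdgeSet]
    ext f
    simp only [Set.mem_diff, Set.mem_setOf_eq, Finset.mem_coe]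
    exact ⟨fun h => h.1, fun h => ⟨h, hTnd f (by simpa using h)⟩⟩
  have hfeF : (fromEdgeSet (↑F : Set (Sym2 V))).edgeSet = ↑F := by
    rw [edgeSet_fromEdgeSet]
    ext f
    simp only [Set.mem_diff, Set.mem_setOf_eq, Finset.mem_coe]
    exact ⟨fun h => h.1, fun h => ⟨h, hFnd f (by simpa using h)⟩⟩
  have hAle : A ≤ G.deleteEdges ↑E := hsup ▸ le_sup_left
  have hBle : B ≤ G.deleteEdges ↑E := hsup ▸ le_sup_right
  have hAE : ∀ e ∈ E, e ∉ A.edgeSet := by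
    intro e he hmem
    have := edgeSet_mono hAle hmem
    rw [edgeSet_deleteEdges] at this
    exact this.2 (by simpa using he)
  have hBE : ∀ e ∈ E, e ∉ B.edgeSet := by
    intro e he hmem
    have := edgeSet_mono hBle hmem
    rw [edgeSet_deleteEdges] at this
    exact this.2 (by simpa using he)
  have hTF : Disjoint T F := altSet_disjoint htrail
  refine ⟨A ⊔ fromEdgeSet ↑F, B ⊔ fromEdgeSet ↑T, ?_, ?_, ?_⟩
  · have : (A ⊔ fromEdgeSet ↑F) ⊔ (B ⊔ fromEdgeSet ↑T)
        = (A ⊔ B) ⊔ (fromEdgeSet ↑F ⊔ fromEdgeSet ↑T) :=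
      sup_sup_sup_comm A (fromEdgeSet ↑F) B (fromEdgeSet ↑T)
    rw [this, ← fromEdgeSet_union, hsup, ← edgeSet_inj, edgeSet_sup, edgeSet_deleteEdges,
      edgeSet_fromEdgeSet]
    have hunion : (↑F : Set (Sym2 V)) ∪ ↑T = ↑E := by
      rw [hE, hT, hF, ← altSet_union c]
      rw [Finset.coe_union]
      exact Set.union_comm _ _
    rw [hunion]
    have : (↑E : Set (Sym2 V)) \ Sym2.diagSet = ↑E := by
      ext f
      simp only [Set.mem_diff, Set.mem_setOf_eq, Finset.mem_coe, Sym2.mem_diagSet]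
      exact ⟨fun h => h.1, fun h => ⟨h, hEnd f (by simpa using h)⟩⟩
    rw [this, Set.diff_union_of_subset hEG]
  · rw [edgeSet_sup, edgeSet_sup, hfeT, hfeF, Set.disjoint_union_left,
      Set.disjoint_union_right, Set.disjoint_union_right]
    refine ⟨⟨hdisj, ?_⟩, ?_, ?_⟩
    · exact Set.disjoint_left.mpr fun e hea het => hAE e (hTsub (Finset.mem_coe.mp het)) hea
    · exact Set.disjoint_left.mpr fun e he hb => hBE e (hFsub (by simpa using he)) hb
    · rw [Finset.disjoint_coe]
      exact hTF.symm
  · intro w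
    have hdA : ((A ⊔ fromEdgeSet ↑F).neighborSet w).ncard
        = (A.neighborSet w).ncard + incCount F w := by
      rw [deg_sup_of_disjoint _ _ (by rw [hfeF]; exact Set.disjoint_left.mpr fun e hea hef => hAE e (hFsub (by simpa using hef)) hea) w,
        deg_fromEdgeSet F hFnd w]
    have hdB : ((B ⊔ fromEdgeSet ↑T).neighborSet w).ncard
        = (B.neighborSet w).ncard + incCount T w := by
      rw [deg_sup_of_disjoint _ _ (by rw [hfeT]; exact Set.disjoint_left.mpr fun e heb het => hBE e (hTsub (by simpa using het)) heb) w,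
        deg_fromEdgeSet T hTnd w]
    rw [hdA, hdB]
    have hcount := incCount_alt htrail w
    by_cases hwv : w = v
    · subst hwv
      have h1 := hbal w
      have h2 : ((B.neighborSet w).ncard : ℤ) ≤ (A.neighborSet w).ncard := by exact_mod_cast hle
      rw [if_pos rfl] at hcount
      rcases Nat.even_or_odd c.length with hev | hod
      · rw [hev.neg_one_pow] at hcount
        rw [abs_le] at h1 ⊢
        push_cast
        push_cast at hcount
        constructor <;> linarith [h1.1, h1.2]
      · rw [hod.neg_one_pow] at hcount
        rw [abs_le] at h1 ⊢
        push_cast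
        push_cast at hcount
        constructor <;> linarith [h1.1, h1.2]
    · rw [if_neg hwv] at hcount
      simp only [sub_self, mul_ite, mul_one, mul_zero] at hcount
      have h1 := hbal w
      rw [abs_le] at h1 ⊢
      push_cast
      push_cast at hcount
      constructor <;> linarith [h1.1, h1.2]
lemma key : ∀ (n : ℕ) (G : SimpleGraph V), G.edgeSet.ncard ≤ n →
    ∃ A B : SimpleGraph V, A ⊔ B = G ∧ Disjoint A.edgeSet B.edgeSet ∧
      ∀ v, |((A.neighborSet v).ncard : ℤ) - ((B.neighborSet v).ncard : ℤ)| ≤ 2 := by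
  intro n
  induction n with
  | zero =>
    intro G hG
    have hbot : G = ⊥ := by
      rw [← edgeSet_eq_empty]
      exact (Set.ncard_eq_zero (Set.toFinite _)).mp (Nat.le_zero.mp hG)
    subst hbot
    refine ⟨⊥, ⊥, by simp, by simp, fun v => ?_⟩
    have : (⊥ : SimpleGraph V).neighborSet v = ∅ := by ext w; simp
    simp [this]
  | succ n ih =>
    intro G hG
    by_cases hbot : G = ⊥
    · subst hbot
      refine ⟨⊥, ⊥, by simp, by simp, fun v => ?_⟩
      have : (⊥ : SimpleGraph V).neighborSet v = ∅ := by ext w; simp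
      simp [this]
    by_cases hac : G.IsAcyclic
    · -- acyclic: remove a leaf edge
      have hne : G.edgeSet.Nonempty := by
        rw [Set.nonempty_iff_ne_empty, ne_eq, edgeSet_eq_empty]
        exact hbot
      obtain ⟨e, he⟩ := hne
      obtain ⟨⟨x, y⟩, rfl⟩ := e.exists_rep
      have hadj : G.Adj x y := G.mem_edgeSet.mp he
      obtain ⟨a, b, hadj', hnbr⟩ := exists_leaf G hac hadj
      have hGe : s(a,b) ∈ G.edgeSet := G.mem_edgeSet.mpr hadj'
      have hcard : (G.deleteEdges {s(a,b)}).edgeSet.ncard ≤ n := by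
        rw [edgeSet_deleteEdges, Set.ncard_diff_singleton_of_mem hGe]
        omega
      obtain ⟨A, B, hsup, hdisj, hbal⟩ := ih _ hcard
      by_cases hle : (B.neighborSet b).ncard ≤ (A.neighborSet b).ncard
      · exact attach_edge G A B a b hadj' hnbr hsup hdisj hbal hle
      · exact attach_edge G B A a b hadj' hnbr (by rwa [sup_comm]) hdisj.symm
          (fun v => by rw [abs_sub_comm]; exact hbal v) (by omega)
    · -- there is a cycle: remove it
      simp only [IsAcyclic, not_forall, not_not] at hac
      obtain ⟨v, c, hc⟩ := hac
      have hEG : (↑c.edges.toFinset : Set (Sym2 V)) ⊆ G.edgeSet :=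
        fun e he => c.edges_subset_edgeSet (List.mem_toFinset.mp (Finset.mem_coe.mp he))
      have hlenpos : 0 < c.edges.length := by
        rw [Walk.length_edges]
        have := hc.three_le_length
        omega
      obtain ⟨e, heE⟩ := List.exists_mem_of_length_pos hlenpos
      have hcard : (G.deleteEdges ↑c.edges.toFinset).edgeSet.ncard ≤ n := by
        have hstrict : (G.deleteEdges ↑c.edges.toFinset).edgeSet ⊂ G.edgeSet := by
          rw [edgeSet_deleteEdges]
          refine ⟨Set.diff_subset, fun hsub2 => ?_⟩
          have heG : e ∈ G.edgeSet := hEG (by simpa using heE)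
          have := hsub2 heG
          rw [Set.mem_diff] at this
          exact this.2 (by simpa using heE)
        have := Set.ncard_lt_ncard hstrict (Set.toFinite _)
        omega
      obtain ⟨A, B, hsup, hdisj, hbal⟩ := ih _ hcard
      by_cases hle : (B.neighborSet v).ncard ≤ (A.neighborSet v).ncard
      · exact attach_trail G A B v c hc.isCircuit.isTrail hsup hdisj hbal hle
      · exact attach_trail G B A v c hc.isCircuit.isTrail (by rwa [sup_comm]) hdisj.symm
          (fun w => by rw [abs_sub_comm]; exact hbal w) (by omega)

lemma split (G : SimpleGraph V) :
    ∃ A B : SimpleGraph V, A ≤ G ∧ B ≤ G ∧ Disjoint A.edgeSet B.edgeSet ∧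
      ∀ v, (G.neighborSet v).ncard ≤ 2 * (A.neighborSet v).ncard + 2 ∧
           (G.neighborSet v).ncard ≤ 2 * (B.neighborSet v).ncard + 2 := by
  obtain ⟨A, B, hsup, hdisj, hbal⟩ := key G.edgeSet.ncard G le_rfl
  refine ⟨A, B, hsup ▸ le_sup_left, hsup ▸ le_sup_right, hdisj, fun v => ?_⟩
  have hadd : (G.neighborSet v).ncard = (A.neighborSet v).ncard + (B.neighborSet v).ncard := by
    rw [← hsup]
    exact deg_sup_of_disjoint A B hdisj v
  have h1 := abs_le.mp (hbal v)
  omega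
lemma multi (ℓ : ℕ) (G : SimpleGraph V) (δ : ℕ) (hδ : ∀ v, δ ≤ (G.neighborSet v).ncard) :
    ∃ H : Fin (2^ℓ) → SimpleGraph V, (∀ i, H i ≤ G) ∧
      (∀ i j, i ≠ j → Disjoint (H i).edgeSet (H j).edgeSet) ∧
      ∀ i v, δ + 2 ≤ 2^ℓ * ((H i).neighborSet v).ncard + 2^(ℓ+1) := by
  induction ℓ with
  | zero =>
    refine ⟨fun _ => G, fun _ => le_rfl, fun i j hij => absurd (?_ : i = j) hij,
      fun i v => ?_⟩
    · apply Fin.ext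
      have hi := i.isLt
      have hj := j.isLt
      simp only [pow_zero] at hi hj
      omega
    have := hδ v
    simp only [pow_zero, one_mul, pow_one]
    omega
  | succ ℓ ih =>
    obtain ⟨H, hle, hdisj, hbound⟩ := ih
    choose A B hA hB hAB hdeg using fun i => split (H i)
    have hpow : (2:ℕ)^(ℓ+1) = 2^ℓ * 2 := by rw [pow_succ]
    have hlt : ∀ k : Fin (2^(ℓ+1)), ¬((k : ℕ) < 2^ℓ) → (k : ℕ) - 2^ℓ < 2^ℓ := by
      intro k hk
      have := k.isLt
      omega
    refine ⟨fun k => if h : (k : ℕ) < 2^ℓ then A ⟨k, h⟩ else B ⟨(k : ℕ) - 2^ℓ, hlt k h⟩,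
      ?_, ?_, ?_⟩
    · intro k
      dsimp only
      split
      · exact le_trans (hA _) (hle _)
      · exact le_trans (hB _) (hle _)
    · intro k k' hkk'
      dsimp only
      have hAsub : ∀ i, (A i).edgeSet ⊆ (H i).edgeSet := fun i => edgeSet_mono (hA i)
      have hBsub : ∀ i, (B i).edgeSet ⊆ (H i).edgeSet := fun i => edgeSet_mono (hB i)
      split <;> split
      all_goals rename_i h1 h2
      · have hne : (⟨(k:ℕ), h1⟩ : Fin (2^ℓ)) ≠ ⟨(k':ℕ), h2⟩ := by
          intro hh
          rw [Fin.mk.injEq] at hh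
          exact hkk' (Fin.ext hh)
        exact (hdisj _ _ hne).mono (hAsub _) (hAsub _)
      · by_cases hii : (⟨(k:ℕ), h1⟩ : Fin (2^ℓ)) = ⟨(k':ℕ) - 2^ℓ, hlt k' h2⟩
        · rw [← hii]
          exact hAB _
        · exact ((hdisj _ _ hii).mono (hAsub _) (hBsub _))
      · by_cases hii : (⟨(k:ℕ) - 2^ℓ, hlt k h1⟩ : Fin (2^ℓ)) = ⟨(k':ℕ), h2⟩
        · rw [hii]
          exact (hAB _).symm
        · exact ((hdisj _ _ hii).mono (hBsub _) (hAsub _))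
      · have hne : (⟨(k:ℕ) - 2^ℓ, hlt k h1⟩ : Fin (2^ℓ)) ≠ ⟨(k':ℕ) - 2^ℓ, hlt k' h2⟩ := by
          intro hh
          rw [Fin.mk.injEq] at hh
          have hk := k.isLt
          have hk' := k'.isLt
          have h2p : (2:ℕ)^(ℓ+1) = 2^ℓ + 2^ℓ := by rw [pow_succ]; ring
          exact hkk' (Fin.ext (by omega))
        exact (hdisj _ _ hne).mono (hBsub _) (hBsub _)
    · intro k v
      dsimp only
      have step : ∀ (i : Fin (2^ℓ)) (d : ℕ), ((H i).neighborSet v).ncard ≤ 2 * d + 2 →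
          δ + 2 ≤ 2^(ℓ+1) * d + 2^(ℓ+2) := by
        intro i d hd
        have h1 := hbound i v
        have h2 : 2^ℓ * ((H i).neighborSet v).ncard ≤ 2^ℓ * (2 * d + 2) :=
          Nat.mul_le_mul_left _ hd
        have h3 : 2^ℓ * (2 * d + 2) = 2^(ℓ+1) * d + 2^(ℓ+1) := by
          rw [pow_succ]; ring
        have h4 : (2:ℕ)^(ℓ+2) = 2^(ℓ+1) + 2^(ℓ+1) := by rw [pow_succ]; ring
        omega
      split
      · exact step _ _ (hdeg _ v).1
      · exact step _ _ (hdeg _ v).2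

end EdgeDisjointSplit

theorem stmt2 {V : Type*} [Fintype V] (G : SimpleGraph V) (δ : ℕ)
    (hδ : ∀ v : V, δ ≤ (G.neighborSet v).ncard) (ℓ : ℕ) (hℓ : 1 ≤ ℓ) :
    ∃ H : Fin (2 ^ ℓ) → SimpleGraph V,
      (∀ i, H i ≤ G) ∧
      (∀ i j, i ≠ j → Disjoint (H i).edgeSet (H j).edgeSet) ∧
      (∀ i, ∀ v : V,
        ((δ : ℝ) - 2 ^ (ℓ + 1) + 2) / 2 ^ ℓ ≤ (((H i).neighborSet v).ncard : ℝ)) := by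
  classical
  obtain ⟨H, h1, h2, h3⟩ := EdgeDisjointSplit.multi ℓ G δ hδ
  refine ⟨H, h1, h2, fun i v => ?_⟩
  rw [div_le_iff₀ (by positivity : (0:ℝ) < 2^ℓ)]
  have hcast : ((δ + 2 : ℕ) : ℝ) ≤ ((2^ℓ * ((H i).neighborSet v).ncard + 2^(ℓ+1) : ℕ) : ℝ) :=
    Nat.cast_le.mpr (h3 i v)
  push_cast at hcast
  linarith
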